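/- Let b and b′ be zigzag paths with b(1) = b′(1). There exists a continuous map K : [0,1] × [0,1] → [0,1] with K(−,0) = b, K(−,1) = b′, K(0,t) = 0 and K(1,t) = b(1) for all t, such that every intermediate path K(−,t) is a zigzag path, if and only if b and b′ have the same length. (This is the content of Theorem 1.7: the projection p : c₂𝕊¹ → c𝕀∼ induces an isomorphism of fundamental categories, so the 2-equivalence class of a controlled path of c𝕀∼ starting at 0 is determined exactly by its length.) -/

import Mathlib

open Set

/-- A continuous map `b : [0,1] → [0,1]` is a *zigzag path of length `n`* (see Context). -/
def IsZigzag (b : ℝ → ℝ) (n : ℕ) : Prop :=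
  ContinuousOn b (Icc 0 1) ∧ (∀ t ∈ Icc (0:ℝ) 1, b t ∈ Icc (0:ℝ) 1) ∧
  ((n = 0 ∧ ∀ t ∈ Icc (0:ℝ) 1, b t = 0) ∨
   (1 ≤ n ∧ ∃ t : ℕ → ℝ, t 0 = 0 ∧ t n = 1 ∧
     (∀ i < n, t i < t (i + 1)) ∧
     (∀ i ≤ n, b (t i) = if Odd i then 1 else 0) ∧
     (∀ i, 1 ≤ i → i ≤ n →
       if Odd i then MonotoneOn b (Icc (t (i - 1)) (t i))
       else AntitoneOn b (Icc (t (i - 1)) (t i)))))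

lemma nodes_le {u : ℕ → ℝ} {n : ℕ} (h : ∀ i < n, u i < u (i+1)) :
    ∀ {i j : ℕ}, i ≤ j → j ≤ n → u i ≤ u j := by
  intro i j hij hjn
  induction j with
  | zero =>
    have : i = 0 := Nat.le_zero.mp hij
    subst this; exact le_refl _
  | succ k ih =>
    rcases Nat.eq_or_lt_of_le hij with rfl | hlt
    · exact le_refl _
    · exact le_trans (ih (Nat.lt_succ_iff.mp hlt) (le_trans (Nat.le_succ k) hjn))
        (le_of_lt (h k (by omega)))

lemma zigzag_count {c : ℝ → ℝ} {m : ℕ} (hc : IsZigzag c m) {n : ℕ} {x : ℕ → ℝ}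
    (hx0 : ∀ j ≤ n, x j ∈ Icc (0:ℝ) 1)
    (hxs : ∀ j < n, x j < x (j+1))
    (hxv : ∀ j ≤ n, if Odd j then 1/2 < c (x j) else c (x j) < 1/2) :
    n ≤ m := by
  classical
  rcases Nat.eq_zero_or_pos n with rfl | hn
  · exact Nat.zero_le m
  rcases hc.2.2 with ⟨rfl, hzero⟩ | ⟨hm1, u, hu0, hun, hus, huv, huseg⟩
  · exfalso
    have h1 := hxv 1 hn
    simp only [Nat.odd_iff] at h1
    norm_num at h1
    have := hzero (x 1) (hx0 1 hn)
    linarith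
  · set ν : ℕ → ℕ := fun j => Nat.findGreatest (fun i => u i ≤ x j) m with hν
    have hule : ∀ {i j : ℕ}, i ≤ j → j ≤ m → u i ≤ u j := fun hij hjm => nodes_le hus hij hjm
    have hνle : ∀ j, ν j ≤ m := fun j => Nat.findGreatest_le m
    have hνspec : ∀ j ≤ n, u (ν j) ≤ x j := by
      intro j hj
      have h0 : u 0 ≤ x j := by rw [hu0]; exact (hx0 j hj).1
      exact Nat.findGreatest_spec (P := fun i => u i ≤ x j) (Nat.zero_le m) h0
    have hνmax : ∀ j, ∀ i, ν j < i → i ≤ m → x j < u i := by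
      intro j i h1 h2
      have := Nat.findGreatest_is_greatest h1 h2
      exact lt_of_not_ge this
    have hνmono : ∀ j < n, ν j ≤ ν (j+1) := by
      intro j hj
      exact Nat.le_findGreatest (hνle j) (le_trans (hνspec j (le_of_lt hj)) (le_of_lt (hxs j hj)))
    set φ : ℕ → ℕ := fun j => if ν j % 2 = j % 2 then ν j else ν j + 1 with hφ
    have hφle : ∀ j ≤ n, φ j ≤ m := by
      intro j hj
      by_cases hpar : ν j % 2 = j % 2
      · simp only [hφ, if_pos hpar]; exact hνle j
      · simp only [hφ, if_neg hpar]
        rcases Nat.lt_or_ge (ν j) m with h | h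
        · omega
        · exfalso
          have hνm : ν j = m := le_antisymm (hνle j) h
          have hxj : x j = u m := by
            have h1 : u m ≤ x j := hνm ▸ hνspec j hj
            have h2 : x j ≤ 1 := (hx0 j hj).2
            rw [← hun] at h2
            linarith
          have hval := huv m (le_refl m)
          have hv := hxv j hj
          rw [hxj, hval] at hv
          rw [hνm] at hpar
          rcases Nat.even_or_odd m with hm | hm
          · rw [if_neg (by simpa [Nat.even_iff] using hm : ¬ Odd m)] at hv
            have : Odd j := by rw [Nat.odd_iff]; rw [Nat.even_iff] at hm; omega
            rw [if_pos this] at hv; linarith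
          · rw [if_pos hm] at hv
            have : ¬ Odd j := by rw [Nat.odd_iff]; rw [Nat.odd_iff] at hm; omega
            rw [if_neg this] at hv; linarith
    have hφstep : ∀ j < n, φ j < φ (j+1) := by
      intro j hj
      have hmono := hνmono j hj
      rcases Nat.lt_or_ge (ν j + 1) (ν (j+1)) with h | h
      · -- ν (j+1) ≥ ν j + 2
        simp only [hφ]; split <;> split <;> omega
      rcases Nat.eq_or_lt_of_le hmono with heq | hlt
      · -- ν (j+1) = ν j
        have hja : j ≤ n := le_of_lt hj
        have hjb : j + 1 ≤ n := hj
        have ham : ν j < m := by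
          rcases Nat.lt_or_ge (ν j) m with h' | h'
          · exact h'
          · exfalso
            have hνm : ν j = m := le_antisymm (hνle j) h'
            have h1 : u m ≤ x j := hνm ▸ hνspec j hja
            have h2 : x (j+1) ≤ 1 := (hx0 (j+1) hjb).2
            have h3 := hxs j hj
            rw [← hun] at h2
            linarith
        have hseg := huseg (ν j + 1) (by omega) (by omega)
        have hx1 : x j ∈ Icc (u (ν j)) (u (ν j + 1)) :=
          ⟨hνspec j hja, le_of_lt (hνmax j (ν j + 1) (by omega) (by omega))⟩
        have hx2 : x (j+1) ∈ Icc (u (ν j)) (u (ν j + 1)) := by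
          refine ⟨le_trans (hνspec j hja) (le_of_lt (hxs j hj)), ?_⟩
          have h5 := hνmax (j+1) (ν (j+1) + 1) (by omega) (by omega)
          rw [heq]
          exact le_of_lt h5
        have hvj := hxv j hja
        have hvj1 := hxv (j+1) hjb
        have hxlt := le_of_lt (hxs j hj)
        rcases Nat.even_or_odd (ν j + 1) with he | ho
        · -- segment antitone
          rw [if_neg (by simpa [Nat.even_iff] using he : ¬ Odd (ν j + 1))] at hseg
          have hcc : c (x (j+1)) ≤ c (x j) := hseg hx1 hx2 hxlt
          -- then j must be odd
          have hjodd : Odd j := by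
            by_contra hje
            rw [if_neg hje] at hvj
            rw [if_pos (by rw [Nat.odd_iff]; rw [Nat.odd_iff] at hje; omega)] at hvj1
            linarith
          -- ν j odd (since ν j + 1 even)
          simp only [hφ]
          rw [Nat.odd_iff] at hjodd
          rw [Nat.even_iff] at he
          rw [← heq]
          split <;> split <;> omega
        · rw [if_pos ho] at hseg
          have hcc : c (x j) ≤ c (x (j+1)) := hseg hx1 hx2 hxlt
          have hje : ¬ Odd j := by
            by_contra hjo
            have hjo' : Odd j := hjo
            rw [if_pos hjo'] at hvj
            rw [if_neg (by rw [Nat.odd_iff]; rw [Nat.odd_iff] at hjo'; omega)] at hvj1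
            linarith
          simp only [hφ]
          rw [Nat.odd_iff] at hje ho
          rw [← heq]
          split <;> split <;> omega
      · -- ν (j+1) = ν j + 1
        have heq : ν (j+1) = ν j + 1 := by omega
        simp only [hφ, heq]
        split <;> split <;> omega
    have hjφ : ∀ j ≤ n, j ≤ φ j := by
      intro j
      induction j with
      | zero => intro _; exact Nat.zero_le _
      | succ k ih =>
        intro hk
        have := hφstep k (by omega)
        have := ih (by omega)
        omega
    exact le_trans (hjφ n (le_refl n)) (hφle n (le_refl n))

lemma zigzag_le_of_close {b c : ℝ → ℝ} {n m : ℕ} (hb : IsZigzag b n) (hc : IsZigzag c m)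
    (h : ∀ s ∈ Icc (0:ℝ) 1, |b s - c s| < 1/2) : n ≤ m := by
  rcases hb.2.2 with ⟨rfl, _⟩ | ⟨hn1, t, ht0, htn, hts, htv, _⟩
  · exact Nat.zero_le m
  · have hmem : ∀ j ≤ n, t j ∈ Icc (0:ℝ) 1 := by
      intro j hj
      constructor
      · rw [← ht0]; exact nodes_le hts (Nat.zero_le j) hj
      · rw [← htn]; exact nodes_le hts hj (le_refl n)
    apply zigzag_count hc hmem hts
    intro j hj
    have hv := htv j hj
    have hcl := h (t j) (hmem j hj)
    rcases abs_lt.mp hcl with ⟨h1, h2⟩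
    by_cases ho : Odd j
    · rw [if_pos ho] at hv ⊢
      rw [hv] at h1 h2; linarith
    · rw [if_neg ho] at hv ⊢
      rw [hv] at h1 h2; linarith

lemma zigzag_unique {b : ℝ → ℝ} {n m : ℕ} (hb : IsZigzag b n) (hb' : IsZigzag b m) : n = m := by
  have h : ∀ s ∈ Icc (0:ℝ) 1, |b s - b s| < 1/2 := by intro s _; norm_num
  exact le_antisymm (zigzag_le_of_close hb hb' h) (zigzag_le_of_close hb' hb h)

lemma zigzag_congr {b c : ℝ → ℝ} {n : ℕ} (hb : IsZigzag b n) (h : ∀ s ∈ Icc (0:ℝ) 1, b s = c s) :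
    IsZigzag c n := by
  obtain ⟨hcont, hrange, hrest⟩ := hb
  refine ⟨hcont.congr fun s hs => (h s hs).symm, fun s hs => h s hs ▸ hrange s hs, ?_⟩
  rcases hrest with ⟨hn0, hz⟩ | ⟨hn1, t, ht0, htn, hts, htv, htseg⟩
  · exact Or.inl ⟨hn0, fun s hs => (h s hs) ▸ hz s hs⟩
  · have hmem : ∀ j ≤ n, t j ∈ Icc (0:ℝ) 1 := by
      intro j hj
      constructor
      · rw [← ht0]; exact nodes_le hts (Nat.zero_le j) hj
      · rw [← htn]; exact nodes_le hts hj (le_refl n)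
    refine Or.inr ⟨hn1, t, ht0, htn, hts, fun i hi => (h (t i) (hmem i hi)) ▸ htv i hi, ?_⟩
    intro i h1 h2
    have hsub : Icc (t (i-1)) (t i) ⊆ Icc (0:ℝ) 1 := by
      apply Icc_subset_Icc (hmem (i-1) (by omega)).1 (hmem i h2).2
    have hseg := htseg i h1 h2
    by_cases ho : Odd i
    · rw [if_pos ho] at hseg ⊢
      intro a ha a' ha' haa
      rw [← h a (hsub ha), ← h a' (hsub ha')]
      exact hseg ha ha' haa
    · rw [if_neg ho] at hseg ⊢
      intro a ha a' ha' haa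
      rw [← h a (hsub ha), ← h a' (hsub ha')]
      exact hseg ha ha' haa

def ZigzagWith (b : ℝ → ℝ) (n : ℕ) (u : ℕ → ℝ) : Prop :=
  ContinuousOn b (Icc 0 1) ∧ (∀ s ∈ Icc (0:ℝ) 1, b s ∈ Icc (0:ℝ) 1) ∧
  u 0 = 0 ∧ u n = 1 ∧ (∀ i < n, u i < u (i+1)) ∧
  (∀ i ≤ n, b (u i) = if Odd i then 1 else 0) ∧
  (∀ i, 1 ≤ i → i ≤ n →
    if Odd i then MonotoneOn b (Icc (u (i - 1)) (u i))
    else AntitoneOn b (Icc (u (i - 1)) (u i)))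

lemma ZigzagWith.isZigzag {b : ℝ → ℝ} {n : ℕ} {u : ℕ → ℝ} (hn : 1 ≤ n)
    (h : ZigzagWith b n u) : IsZigzag b n := by
  obtain ⟨h1, h2, h3, h4, h5, h6, h7⟩ := h
  exact ⟨h1, h2, Or.inr ⟨hn, u, h3, h4, h5, h6, h7⟩⟩

lemma zigzagWith_convex {c₁ c₂ : ℝ → ℝ} {n : ℕ} {u : ℕ → ℝ} {l : ℝ}
    (h1 : ZigzagWith c₁ n u) (h2 : ZigzagWith c₂ n u) (hl0 : 0 ≤ l) (hl1 : l ≤ 1) :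
    ZigzagWith (fun s => (1 - l) * c₁ s + l * c₂ s) n u := by
  obtain ⟨a1, a2, a3, a4, a5, a6, a7⟩ := h1
  obtain ⟨b1, b2, -, -, -, b6, b7⟩ := h2
  refine ⟨?_, ?_, a3, a4, a5, ?_, ?_⟩
  · exact (continuousOn_const.mul a1).add (continuousOn_const.mul b1)
  · intro s hs
    have q1 := a2 s hs; have q2 := b2 s hs
    simp only [mem_Icc] at q1 q2 ⊢
    constructor
    · nlinarith [q1.1, q2.1]
    · nlinarith [q1.2, q2.2]
  · intro i hi
    simp only
    rw [a6 i hi, b6 i hi]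
    split <;> ring
  · intro i hi1 hi2
    have s1 := a7 i hi1 hi2
    have s2 := b7 i hi1 hi2
    by_cases ho : Odd i
    · rw [if_pos ho] at s1 s2 ⊢
      intro x hx y hy hxy
      have := s1 hx hy hxy
      have := s2 hx hy hxy
      simp only
      nlinarith
    · rw [if_neg ho] at s1 s2 ⊢
      intro x hx y hy hxy
      have := s1 hx hy hxy
      have := s2 hx hy hxy
      simp only
      nlinarith

lemma min_sub_min_mono {y x : ℝ} (hyx : y ≤ x) : Monotone (fun s => min s x - min s y) := by
  intro s s' hss
  simp only
  rcases le_total s y with h1 | h1 <;> rcases le_total s' y with h2 | h2 <;>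
    rcases le_total s x with h3 | h3 <;> rcases le_total s' x with h4 | h4 <;>
    simp [min_eq_left, min_eq_right, h1, h2, h3, h4] <;> linarith

/-- Intermediate node positions. -/
noncomputable def zzM (a a' : ℕ → ℝ) (i : ℕ) (τ : ℝ) : ℝ := (1 - τ) * a i + τ * a' i

/-- The piecewise-linear reparametrization carrying node `zzM a a' i τ` to `a i`. -/
noncomputable def zzR (a a' : ℕ → ℝ) (n : ℕ) (τ s : ℝ) : ℝ :=
  ∑ i ∈ Finset.range n,
    ((a (i+1) - a i) / (zzM a a' (i+1) τ - zzM a a' i τ)) *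
      (min s (zzM a a' (i+1) τ) - min s (zzM a a' i τ))

lemma zigzag_construct {b b' : ℝ → ℝ} {n : ℕ} (hn : 1 ≤ n) {a a' : ℕ → ℝ}
    (hb : ZigzagWith b n a) (hb' : ZigzagWith b' n a') (hend : b 1 = b' 1) :
    ∃ K : ℝ → ℝ → ℝ,
      ContinuousOn (fun p : ℝ × ℝ => K p.1 p.2) (Icc 0 1 ×ˢ Icc 0 1) ∧
      (∀ s ∈ Icc (0:ℝ) 1, K s 0 = b s) ∧
      (∀ s ∈ Icc (0:ℝ) 1, K s 1 = b' s) ∧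
      (∀ t ∈ Icc (0:ℝ) 1, K 0 t = 0) ∧
      (∀ t ∈ Icc (0:ℝ) 1, K 1 t = b 1) ∧
      (∀ t ∈ Icc (0:ℝ) 1, ∃ m, IsZigzag (fun s => K s t) m) := by
  obtain ⟨hbc, hbr, ha0, han, has, hav, haseg⟩ := hb
  have hb'c := hb'.1
  have ha'0 : a' 0 = 0 := hb'.2.2.1
  have ha'n : a' n = 1 := hb'.2.2.2.1
  have ha's : ∀ i < n, a' i < a' (i+1) := hb'.2.2.2.2.1
  -- basic facts about M
  have hM0 : ∀ τ : ℝ, zzM a a' 0 τ = 0 := by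
    intro τ; simp [zzM, ha0, ha'0]
  have hMn : ∀ τ : ℝ, zzM a a' n τ = 1 := by
    intro τ; simp [zzM, han, ha'n]
  have hMd : ∀ τ ∈ Icc (0:ℝ) 1, ∀ i < n, 0 < zzM a a' (i+1) τ - zzM a a' i τ := by
    intro τ hτ i hi
    have h1 := has i hi
    have h2 := ha's i hi
    simp only [zzM]
    have hd : 0 < min (a (i+1) - a i) (a' (i+1) - a' i) := lt_min (by linarith) (by linarith)
    have e1 : (0:ℝ) ≤ (1 - τ) * ((a (i+1) - a i) - min (a (i+1) - a i) (a' (i+1) - a' i)) :=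
      mul_nonneg (by linarith [hτ.2]) (by linarith [min_le_left (a (i+1) - a i) (a' (i+1) - a' i)])
    have e2 : (0:ℝ) ≤ τ * ((a' (i+1) - a' i) - min (a (i+1) - a i) (a' (i+1) - a' i)) :=
      mul_nonneg hτ.1 (by linarith [min_le_right (a (i+1) - a i) (a' (i+1) - a' i)])
    nlinarith
  have hMmono : ∀ τ ∈ Icc (0:ℝ) 1, ∀ i j : ℕ, i ≤ j → j ≤ n →
      zzM a a' i τ ≤ zzM a a' j τ := by
    intro τ hτ i j hij hjn
    exact nodes_le (u := fun i => zzM a a' i τ) (fun i hi => by linarith [hMd τ hτ i hi]) hij hjn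
  -- monotonicity of ρ in s
  have hρmono : ∀ τ ∈ Icc (0:ℝ) 1, Monotone (zzR a a' n τ) := by
    intro τ hτ s s' hss
    apply Finset.sum_le_sum
    intro i hi
    rw [Finset.mem_range] at hi
    apply mul_le_mul_of_nonneg_left
    · exact min_sub_min_mono (hMmono τ hτ i (i+1) (Nat.le_succ i) hi) hss
    · exact div_nonneg (by linarith [has i hi]) (le_of_lt (hMd τ hτ i hi))
  -- node values of ρ
  have hρnode : ∀ τ ∈ Icc (0:ℝ) 1, ∀ k ≤ n, zzR a a' n τ (zzM a a' k τ) = a k := by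
    intro τ hτ k hk
    unfold zzR
    rw [← Finset.sum_range_add_sum_Ico _ hk]
    have h1 : ∑ i ∈ Finset.range k,
        ((a (i+1) - a i) / (zzM a a' (i+1) τ - zzM a a' i τ)) *
          (min (zzM a a' k τ) (zzM a a' (i+1) τ) - min (zzM a a' k τ) (zzM a a' i τ))
        = ∑ i ∈ Finset.range k, (a (i+1) - a i) := by
      apply Finset.sum_congr rfl
      intro i hi
      rw [Finset.mem_range] at hi
      have hi' : i < n := by omega
      have e1 : min (zzM a a' k τ) (zzM a a' (i+1) τ) = zzM a a' (i+1) τ :=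
        min_eq_right (hMmono τ hτ (i+1) k hi hk)
      have e2 : min (zzM a a' k τ) (zzM a a' i τ) = zzM a a' i τ :=
        min_eq_right (hMmono τ hτ i k (by omega) hk)
      rw [e1, e2, div_mul_cancel₀]
      exact ne_of_gt (hMd τ hτ i hi')
    have h2 : ∑ i ∈ Finset.Ico k n,
        ((a (i+1) - a i) / (zzM a a' (i+1) τ - zzM a a' i τ)) *
          (min (zzM a a' k τ) (zzM a a' (i+1) τ) - min (zzM a a' k τ) (zzM a a' i τ)) = 0 := by
      apply Finset.sum_eq_zero
      intro i hi
      rw [Finset.mem_Ico] at hi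
      have e1 : min (zzM a a' k τ) (zzM a a' (i+1) τ) = zzM a a' k τ :=
        min_eq_left (hMmono τ hτ k (i+1) (by omega) hi.2)
      have e2 : min (zzM a a' k τ) (zzM a a' i τ) = zzM a a' k τ :=
        min_eq_left (hMmono τ hτ k i hi.1 (by omega))
      rw [e1, e2, sub_self, mul_zero]
    rw [h1, h2, add_zero, Finset.sum_range_sub (fun i => a i), ha0, sub_zero]
  -- ρ maps [0,1] to [0,1]
  have hρ01 : ∀ τ ∈ Icc (0:ℝ) 1, ∀ s ∈ Icc (0:ℝ) 1, zzR a a' n τ s ∈ Icc (0:ℝ) 1 := by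
    intro τ hτ s hs
    have l1 : zzR a a' n τ 0 = 0 := by
      have := hρnode τ hτ 0 (Nat.zero_le n)
      rwa [hM0, ha0] at this
    have l2 : zzR a a' n τ 1 = 1 := by
      have := hρnode τ hτ n (le_refl n)
      rwa [hMn, han] at this
    constructor
    · rw [← l1]; exact hρmono τ hτ hs.1
    · rw [← l2]; exact hρmono τ hτ hs.2
  -- ρ at τ = 0 is the identity on [0,1]
  have hρ0 : ∀ s ∈ Icc (0:ℝ) 1, zzR a a' n 0 s = s := by
    intro s hs
    have hM0' : ∀ i, zzM a a' i 0 = a i := by intro i; simp [zzM]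
    unfold zzR
    have : ∀ i ∈ Finset.range n,
        ((a (i+1) - a i) / (zzM a a' (i+1) 0 - zzM a a' i 0)) *
          (min s (zzM a a' (i+1) 0) - min s (zzM a a' i 0))
        = min s (a (i+1)) - min s (a i) := by
      intro i hi
      rw [Finset.mem_range] at hi
      rw [hM0', hM0', div_self (ne_of_gt (by linarith [has i hi])), one_mul]
    rw [Finset.sum_congr rfl this, Finset.sum_range_sub (fun i => min s (a i)), ha0, han]
    rw [min_eq_left hs.2, min_eq_right hs.1, sub_zero]
  -- ρ is continuous in s for fixed τ
  have hρconts : ∀ τ : ℝ, Continuous (zzR a a' n τ) := by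
    intro τ
    apply continuous_finset_sum
    intro i _
    exact continuous_const.mul ((continuous_id.min continuous_const).sub
      (continuous_id.min continuous_const))
  -- each ρ-reparametrized path is a zigzag with nodes M · τ
  have hzig : ∀ τ ∈ Icc (0:ℝ) 1, ZigzagWith (fun s => b (zzR a a' n τ s)) n
      (fun i => zzM a a' i τ) := by
    intro τ hτ
    refine ⟨?_, ?_, hM0 τ, hMn τ, fun i hi => by linarith [hMd τ hτ i hi], ?_, ?_⟩
    · exact hbc.comp (hρconts τ).continuousOn (fun s hs => hρ01 τ hτ s hs)
    · exact fun s hs => hbr _ (hρ01 τ hτ s hs)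
    · intro i hi
      simp only
      rw [hρnode τ hτ i hi]
      exact hav i hi
    · intro i hi1 hi2
      have hmap : ∀ s ∈ Icc (zzM a a' (i-1) τ) (zzM a a' i τ),
          zzR a a' n τ s ∈ Icc (a (i-1)) (a i) := by
        intro s hs
        constructor
        · rw [← hρnode τ hτ (i-1) (by omega)]; exact hρmono τ hτ hs.1
        · rw [← hρnode τ hτ i hi2]; exact hρmono τ hτ hs.2
      have hseg := haseg i hi1 hi2
      by_cases ho : Odd i
      · rw [if_pos ho] at hseg ⊢
        intro x hx y hy hxy
        exact hseg (hmap x hx) (hmap y hy) (hρmono τ hτ hxy)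
      · rw [if_neg ho] at hseg ⊢
        intro x hx y hy hxy
        exact hseg (hmap x hx) (hmap y hy) (hρmono τ hτ hxy)
  -- auxiliary value facts
  have ha'v : ∀ i ≤ n, b' (a' i) = if Odd i then 1 else 0 := hb'.2.2.2.2.2.1
  have hb0 : b 0 = 0 := by
    have := hav 0 (Nat.zero_le n); rw [ha0] at this; simpa using this
  have hb'0 : b' 0 = 0 := by
    have := ha'v 0 (Nat.zero_le n); rw [ha'0] at this; simpa using this
  have htau : ∀ t ∈ Icc (0:ℝ) 1, min (2*t) 1 ∈ Icc (0:ℝ) 1 := by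
    intro t ht
    exact ⟨le_min (by linarith [ht.1]) (by norm_num), min_le_right _ _⟩
  have hz0 : ∀ τ ∈ Icc (0:ℝ) 1, zzR a a' n τ 0 = 0 := by
    intro τ hτ
    have := hρnode τ hτ 0 (Nat.zero_le n); rwa [hM0, ha0] at this
  have hz1 : ∀ τ ∈ Icc (0:ℝ) 1, zzR a a' n τ 1 = 1 := by
    intro τ hτ
    have := hρnode τ hτ n (le_refl n); rwa [hMn, han] at this
  -- the homotopy
  refine ⟨fun s t => (1 - max (2*t - 1) 0) * b (zzR a a' n (min (2*t) 1) s)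
      + max (2*t - 1) 0 * b' s, ?_, ?_, ?_, ?_, ?_, ?_⟩
  · -- joint continuity
    have hτc : Continuous (fun p : ℝ×ℝ => min (2*p.2) 1) :=
      (continuous_const.mul continuous_snd).min continuous_const
    have hMc : ∀ j, Continuous (fun p : ℝ×ℝ => zzM a a' j (min (2*p.2) 1)) := by
      intro j
      simp only [zzM]
      exact ((continuous_const.sub hτc).mul continuous_const).add (hτc.mul continuous_const)
    have hlamc : Continuous (fun p : ℝ×ℝ => max (2*p.2 - 1) 0) :=
      ((continuous_const.mul continuous_snd).sub continuous_const).max continuous_const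
    have hinner : ContinuousOn (fun p : ℝ×ℝ => zzR a a' n (min (2*p.2) 1) p.1)
        (Icc 0 1 ×ˢ Icc 0 1) := by
      simp only [zzR]
      apply continuousOn_finset_sum
      intro i hi
      rw [Finset.mem_range] at hi
      apply ContinuousOn.mul
      · apply ContinuousOn.div continuousOn_const ((hMc (i+1)).sub (hMc i)).continuousOn
        intro p hp
        exact ne_of_gt (hMd _ (htau p.2 hp.2) i hi)
      · exact ((continuous_fst.min (hMc (i+1))).sub (continuous_fst.min (hMc i))).continuousOn
    apply ContinuousOn.add
    · apply ContinuousOn.mul (continuous_const.sub hlamc).continuousOn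
      apply hbc.comp hinner
      intro p hp
      exact hρ01 _ (htau p.2 hp.2) p.1 hp.1
    · exact ContinuousOn.mul hlamc.continuousOn
        (hb'c.comp continuous_fst.continuousOn (fun p hp => hp.1))
  · -- K s 0 = b s
    intro s hs
    have e1 : max (2*(0:ℝ) - 1) 0 = 0 := by norm_num
    have e2 : min (2*(0:ℝ)) 1 = 0 := by norm_num
    simp only [e1, e2]
    rw [hρ0 s hs]; ring
  · -- K s 1 = b' s
    intro s hs
    have e1 : max (2*(1:ℝ) - 1) 0 = 1 := by norm_num
    simp only [e1]
    ring
  · -- K 0 t = 0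
    intro t ht
    simp only
    rw [hz0 _ (htau t ht), hb0, hb'0]; ring
  · -- K 1 t = b 1
    intro t ht
    simp only
    rw [hz1 _ (htau t ht), hend]; ring
  · -- intermediate paths are zigzags
    intro t ht
    refine ⟨n, ?_⟩
    rcases le_total t (1/2) with h | h
    · have e1 : max (2*t - 1) 0 = 0 := max_eq_right (by linarith)
      have hτ : min (2*t) 1 ∈ Icc (0:ℝ) 1 := htau t ht
      apply zigzag_congr ((hzig _ hτ).isZigzag hn)
      intro s hs
      simp only [e1]
      ring
    · have e2 : min (2*t) 1 = 1 := min_eq_right (by linarith)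
      have e1 : max (2*t - 1) 0 = 2*t - 1 := max_eq_left (by linarith)
      have hM1 : (fun i => zzM a a' i 1) = a' := by
        funext i; simp [zzM]
      have hzz := hzig 1 (by constructor <;> norm_num)
      rw [hM1] at hzz
      have hconv := zigzagWith_convex (l := 2*t - 1) hzz hb' (by linarith) (by linarith [ht.2])
      apply zigzag_congr (hconv.isZigzag hn)
      intro s hs
      simp only [e1, e2]

/-- Two zigzag paths with the same right endpoint are joined by a homotopy with fixed
endpoints all of whose intermediate paths are zigzag paths if and only if they have the
same length. (The content of Theorem 1.7: the 2-equivalence class of a controlled path of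
`c𝕀∼` starting at `0` is determined exactly by its length.) -/
theorem zigzag_homotopic_iff_length_eq (b b' : ℝ → ℝ) (n n' : ℕ)
    (hb : IsZigzag b n) (hb' : IsZigzag b' n') (hend : b 1 = b' 1) :
    (∃ K : ℝ → ℝ → ℝ,
      ContinuousOn (fun p : ℝ × ℝ => K p.1 p.2) (Icc 0 1 ×ˢ Icc 0 1) ∧
      (∀ s ∈ Icc (0:ℝ) 1, K s 0 = b s) ∧
      (∀ s ∈ Icc (0:ℝ) 1, K s 1 = b' s) ∧
      (∀ t ∈ Icc (0:ℝ) 1, K 0 t = 0) ∧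
      (∀ t ∈ Icc (0:ℝ) 1, K 1 t = b 1) ∧
      (∀ t ∈ Icc (0:ℝ) 1, ∃ m, IsZigzag (fun s => K s t) m)) ↔ n = n' := by
  constructor
  · rintro ⟨K, hKc, hK0, hK1, hKl, hKr, hKz⟩
    have hcomp : IsCompact ((Icc (0:ℝ) 1) ×ˢ (Icc (0:ℝ) 1)) := isCompact_Icc.prod isCompact_Icc
    have huc := hcomp.uniformContinuousOn_of_continuous hKc
    rw [Metric.uniformContinuousOn_iff] at huc
    obtain ⟨δ, hδ, hδ'⟩ := huc (1/2) (by norm_num)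
    have key : ∀ t₁ ∈ Icc (0:ℝ) 1, ∀ t₂ ∈ Icc (0:ℝ) 1, dist t₁ t₂ < δ →
        ∀ m₁ m₂, IsZigzag (fun s => K s t₁) m₁ → IsZigzag (fun s => K s t₂) m₂ → m₁ = m₂ := by
      intro t₁ h₁ t₂ h₂ hd m₁ m₂ hz₁ hz₂
      have hclose : ∀ s ∈ Icc (0:ℝ) 1, |K s t₁ - K s t₂| < 1/2 := by
        intro s hs
        have hdp : dist ((s, t₁) : ℝ × ℝ) (s, t₂) < δ := by
          rw [Prod.dist_eq, dist_self, max_eq_right dist_nonneg]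
          exact hd
        have := hδ' (s, t₁) ⟨hs, h₁⟩ (s, t₂) ⟨hs, h₂⟩ hdp
        simpa [Real.dist_eq] using this
      refine le_antisymm (zigzag_le_of_close hz₁ hz₂ hclose)
        (zigzag_le_of_close hz₂ hz₁ (fun s hs => by rw [abs_sub_comm]; exact hclose s hs))
    obtain ⟨N, hN⟩ := exists_nat_gt (1/δ)
    have hNpos : (0:ℝ) < N := lt_trans (by positivity) hN
    have hNδ : 1/(N:ℝ) < δ := by
      rw [div_lt_iff₀ hδ] at hN
      rw [div_lt_iff₀ hNpos]
      nlinarith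
    have steps : ∀ k : ℕ, k ≤ N → IsZigzag (fun s => K s ((k:ℝ)/N)) n := by
      intro k
      induction k with
      | zero =>
        intro _
        have h0 : ((0:ℕ):ℝ)/(N:ℝ) = 0 := by simp
        rw [h0]
        exact zigzag_congr hb (fun s hs => (hK0 s hs).symm)
      | succ k ih =>
        intro hk
        have hk' := ih (by omega)
        have hkN : (k:ℝ) ≤ (N:ℝ) := by exact_mod_cast le_trans (Nat.le_succ k) hk
        have hk1N : ((k+1:ℕ):ℝ) ≤ (N:ℝ) := by exact_mod_cast hk
        have hmem1 : ((k:ℝ)/N) ∈ Icc (0:ℝ) 1 :=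
          ⟨by positivity, by rw [div_le_one hNpos]; exact hkN⟩
        have hmem2 : (((k+1:ℕ):ℝ)/N) ∈ Icc (0:ℝ) 1 :=
          ⟨by positivity, by rw [div_le_one hNpos]; exact hk1N⟩
        obtain ⟨m, hm⟩ := hKz _ hmem2
        have hdist : dist ((k:ℝ)/N) (((k+1:ℕ):ℝ)/N) < δ := by
          rw [Real.dist_eq]
          have e : (k:ℝ)/N - ((k+1:ℕ):ℝ)/N = -(1/N) := by push_cast; field_simp; ring
          rw [e, abs_neg, abs_of_pos (by positivity)]
          exact hNδ
        have heq := key _ hmem1 _ hmem2 hdist n m hk' hm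
        rw [← heq] at hm
        exact hm
    have hfin := steps N (le_refl N)
    have hNN : ((N:ℝ))/(N:ℝ) = 1 := div_self (ne_of_gt hNpos)
    rw [hNN] at hfin
    exact zigzag_unique (zigzag_congr hfin (fun s hs => hK1 s hs)) hb'
  · intro heq
    subst heq
    rcases Nat.eq_zero_or_pos n with rfl | hn
    · have hb0 : ∀ s ∈ Icc (0:ℝ) 1, b s = 0 := by
        rcases hb.2.2 with ⟨_, h⟩ | ⟨h, _⟩
        · exact h
        · omega
      have hb'0 : ∀ s ∈ Icc (0:ℝ) 1, b' s = 0 := by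
        rcases hb'.2.2 with ⟨_, h⟩ | ⟨h, _⟩
        · exact h
        · omega
      refine ⟨fun _ _ => 0, continuousOn_const, ?_, ?_, ?_, ?_, ?_⟩
      · intro s hs; exact (hb0 s hs).symm
      · intro s hs; exact (hb'0 s hs).symm
      · intro t ht; rfl
      · intro t ht; exact (hb0 1 ⟨by norm_num, le_refl 1⟩).symm
      · intro t ht
        refine ⟨0, continuousOn_const, fun s hs => ?_, Or.inl ⟨rfl, fun s hs => rfl⟩⟩
        constructor <;> norm_num
    · have h1 : ∃ a, ZigzagWith b n a := by
        rcases hb.2.2 with ⟨h0, _⟩ | ⟨_, t, p1, p2, p3, p4, p5⟩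
        · omega
        · exact ⟨t, hb.1, hb.2.1, p1, p2, p3, p4, p5⟩
      have h2 : ∃ a', ZigzagWith b' n a' := by
        rcases hb'.2.2 with ⟨h0, _⟩ | ⟨_, t, p1, p2, p3, p4, p5⟩
        · omega
        · exact ⟨t, hb'.1, hb'.2.1, p1, p2, p3, p4, p5⟩
      obtain ⟨a, ha⟩ := h1
      obtain ⟨a', ha'⟩ := h2
      exact zigzag_construct hn ha ha' hend
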